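/- arXiv:2105.14397 — 4 statements merged into one kernel-verified Lean document; each statement's English description precedes it below -/
import Mathlib

section
/- If M is a minimizer of ∑_{k=1}^N d_H(M, A^{(k)}) over adjacency matrices of simple graphs on n vertices (a sample Fréchet median for the Hamming distance), then its number of edges satisfies e(M) ≤ 2·ē_N, where ē_N = (1/N)∑_{k=1}^N e(A^{(k)}) is the sample mean number of edges. -/
open Finset

/-- `A` is the adjacency matrix of a simple labeled graph on `n` vertices:
symmetric, `{0,1}`-valued, zero diagonal. -/
def IsAdj {n : ℕ} (A : Matrix (Fin n) (Fin n) ℝ) : Prop :=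
  (∀ i j, A i j = 0 ∨ A i j = 1) ∧ (∀ i j, A i j = A j i) ∧ (∀ i, A i i = 0)

/-- Number of edges `e(A) = ∑_{i<j} a_{ij}`. -/
def edges {n : ℕ} (A : Matrix (Fin n) (Fin n) ℝ) : ℝ :=
  ∑ i : Fin n, ∑ j : Fin n, if i < j then A i j else 0

/-- Hamming distance `d_H(A,B) = ∑_{i<j} |a_{ij} - b_{ij}|`. -/
def hammingD {n : ℕ} (A B : Matrix (Fin n) (Fin n) ℝ) : ℝ :=
  ∑ i : Fin n, ∑ j : Fin n, if i < j then |A i j - B i j| else 0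

lemma hamming_zero {n : ℕ} (A : Matrix (Fin n) (Fin n) ℝ) (hA : IsAdj A) :
    hammingD 0 A = edges A := by
  unfold hammingD edges
  refine Finset.sum_congr rfl fun i _ => Finset.sum_congr rfl fun j _ => ?_
  split_ifs with h
  · simp only [Matrix.zero_apply, zero_sub, abs_neg]
    rcases hA.1 i j with ha | ha <;> simp [ha]
  · rfl

lemma edges_sub_le {n : ℕ} (M A : Matrix (Fin n) (Fin n) ℝ) :
    edges M - edges A ≤ hammingD M A := by
  unfold edges hammingD
  rw [← Finset.sum_sub_distrib]
  refine Finset.sum_le_sum fun i _ => ?_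
  rw [← Finset.sum_sub_distrib]
  refine Finset.sum_le_sum fun j _ => ?_
  split_ifs with h
  · exact le_abs_self _
  · simp

theorem median_edges_le_two_mean {n N : ℕ} (hN : 0 < N)
    (A : Fin N → Matrix (Fin n) (Fin n) ℝ) (hA : ∀ k, IsAdj (A k))
    (M : Matrix (Fin n) (Fin n) ℝ) (hM : IsAdj M)
    (hmin : ∀ B : Matrix (Fin n) (Fin n) ℝ, IsAdj B →
      ∑ k : Fin N, hammingD M (A k) ≤ ∑ k : Fin N, hammingD B (A k)) :
    edges M ≤ 2 * ((1 : ℝ) / N * ∑ k : Fin N, edges (A k)) := by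
  have hz : IsAdj (0 : Matrix (Fin n) (Fin n) ℝ) :=
    ⟨fun i j => Or.inl rfl, fun i j => rfl, fun i => rfl⟩
  have h1 : ∑ k : Fin N, hammingD M (A k) ≤ ∑ k : Fin N, edges (A k) := by
    have := hmin 0 hz
    calc ∑ k : Fin N, hammingD M (A k) ≤ ∑ k : Fin N, hammingD 0 (A k) := this
      _ = ∑ k : Fin N, edges (A k) :=
        Finset.sum_congr rfl fun k _ => hamming_zero (A k) (hA k)
  have h2 : (N : ℝ) * edges M - ∑ k : Fin N, edges (A k) ≤ ∑ k : Fin N, hammingD M (A k) := by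
    have := Finset.sum_le_sum (fun k (_ : k ∈ Finset.univ) => edges_sub_le M (A k))
    simpa [Finset.sum_sub_distrib, Finset.card_univ, mul_comm] using this
  have hNr : (0 : ℝ) < N := by exact_mod_cast hN
  rw [show (2:ℝ) * ((1:ℝ)/N * ∑ k : Fin N, edges (A k)) = (2 * ∑ k : Fin N, edges (A k)) / N
    from by ring, le_div_iff₀ hNr]
  nlinarith [h1, h2]
end

section
/- Let M be the majority-rule matrix (M_{ij}=1 iff ∑_k a^{(k)}_{ij} ≥ N/2 for i<j). Then (1/N)∑_{k=1}^N d_H(M, A^{(k)})² ≤ 2·ē_N² + σ_N²(e), where ē_N is the sample mean number of edges and σ_N²(e) = (1/N)∑_k e(A^{(k)})² - ē_N² is the sample variance of edge counts. -/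
open Finset

theorem frechet_fn_at_majority_median {n N : ℕ} (hN : 0 < N)
    (A : Fin N → Matrix (Fin n) (Fin n) ℝ) (hA : ∀ k, IsAdj (A k))
    (M : Matrix (Fin n) (Fin n) ℝ) (hMadj : IsAdj M)
    (hM : ∀ i j : Fin n, i < j →
      M i j = if (N : ℝ) / 2 ≤ ∑ k : Fin N, A k i j then 1 else 0) :
    (1 : ℝ) / N * ∑ k : Fin N, (hammingD M (A k)) ^ 2 ≤
      2 * ((1 : ℝ) / N * ∑ k : Fin N, edges (A k)) ^ 2 +
        ((1 : ℝ) / N * ∑ k : Fin N, (edges (A k)) ^ 2 -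
          ((1 : ℝ) / N * ∑ k : Fin N, edges (A k)) ^ 2) := by
  classical
  have hNR : (0:ℝ) < N := by exact_mod_cast hN
  set m : ℝ := edges M with hm_def
  set s : Fin N → ℝ := fun k => ∑ i : Fin n, ∑ j : Fin n,
      if i < j then M i j * A k i j else 0 with hs_def
  have hM01 : ∀ i j, M i j = 0 ∨ M i j = 1 := hMadj.1
  have hA01 : ∀ k i j, A k i j = 0 ∨ A k i j = 1 := fun k => (hA k).1
  -- identity d_k = m + e_k - 2 s_k
  have hd : ∀ k, hammingD M (A k) = m + edges (A k) - 2 * s k := by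
    intro k
    have h1 : ∀ i j : Fin n, (if i < j then |M i j - A k i j| else 0)
        = (if i < j then M i j else 0) + (if i < j then A k i j else 0)
          - 2 * (if i < j then M i j * A k i j else 0) := by
      intro i j
      by_cases h : i < j
      · simp only [if_pos h]
        rcases hM01 i j with h1 | h1 <;> rcases hA01 k i j with h2 | h2 <;>
          rw [h1, h2] <;> norm_num
      · simp [h]
    simp only [hammingD, hm_def, hs_def, edges]
    rw [Finset.sum_congr rfl fun i _ => Finset.sum_congr rfl fun j _ => h1 i j]
    simp [Finset.sum_add_distrib, Finset.sum_sub_distrib, Finset.mul_sum]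
  -- pointwise facts
  have hs_nonneg : ∀ k, 0 ≤ s k := by
    intro k
    apply Finset.sum_nonneg; intro i _
    apply Finset.sum_nonneg; intro j _
    by_cases h : i < j
    · simp only [if_pos h]
      rcases hM01 i j with h1 | h1 <;> rcases hA01 k i j with h2 | h2 <;>
        rw [h1, h2] <;> norm_num
    · simp [h]
  have hs_le : ∀ k, s k ≤ edges (A k) := by
    intro k
    apply Finset.sum_le_sum; intro i _
    apply Finset.sum_le_sum; intro j _
    by_cases h : i < j
    · simp only [if_pos h]
      rcases hM01 i j with h1 | h1 <;> rcases hA01 k i j with h2 | h2 <;>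
        rw [h1, h2] <;> norm_num
    · simp [h]
  have hm_nonneg : 0 ≤ m := by
    apply Finset.sum_nonneg; intro i _
    apply Finset.sum_nonneg; intro j _
    by_cases h : i < j
    · simp only [if_pos h]
      rcases hM01 i j with h1 | h1 <;> rw [h1] <;> norm_num
    · simp [h]
  -- majority bound : N/2 * m ≤ ∑ s
  have hS : (N:ℝ)/2 * m ≤ ∑ k : Fin N, s k := by
    rw [hm_def, edges, Finset.mul_sum]
    simp only [hs_def]
    rw [Finset.sum_comm]
    apply Finset.sum_le_sum; intro i _
    rw [Finset.mul_sum, Finset.sum_comm]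
    apply Finset.sum_le_sum; intro j _
    by_cases h : i < j
    · simp only [if_pos h]
      rcases hM01 i j with h1 | h1
      · rw [h1]; simp
      · rw [h1]
        have hc : (N:ℝ)/2 ≤ ∑ k : Fin N, A k i j := by
          by_contra hc
          have := hM i j h
          rw [h1, if_neg hc] at this
          norm_num at this
        simpa using hc
    · simp [h]
  -- abbreviations
  set E : ℝ := ∑ k : Fin N, edges (A k) with hE_def
  set Q : ℝ := ∑ k : Fin N, (edges (A k))^2 with hQ_def
  set S : ℝ := ∑ k : Fin N, s k with hSdef
  set T : ℝ := ∑ k : Fin N, (s k)^2 with hTdef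
  set P : ℝ := ∑ k : Fin N, edges (A k) * s k with hPdef
  have hD2 : ∑ k : Fin N, (hammingD M (A k))^2
      = N*m^2 + Q + 4*T + 2*m*E - 4*m*S - 4*P := by
    have : ∑ k : Fin N, (hammingD M (A k))^2
        = ∑ k : Fin N, (m^2 + (edges (A k))^2 + 4*(s k)^2 + 2*m*edges (A k)
            - 4*m*s k - 4*(edges (A k) * s k)) :=
      Finset.sum_congr rfl fun k _ => by rw [hd k]; ring
    rw [this]
    simp only [Finset.sum_add_distrib, Finset.sum_sub_distrib, ← Finset.mul_sum,
      Finset.sum_const, Finset.card_univ, Fintype.card_fin, nsmul_eq_mul]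
    rfl
  have hTP : T ≤ P := by
    rw [hTdef, hPdef]
    apply Finset.sum_le_sum; intro k _
    nlinarith [hs_le k, hs_nonneg k]
  have key : (∑ k : Fin N, (hammingD M (A k))^2) * N ≤ Q * N + E^2 := by
    rw [hD2]
    nlinarith [sq_nonneg ((N:ℝ)*m - E),
      mul_le_mul_of_nonneg_left hTP hNR.le,
      mul_le_mul_of_nonneg_left hS (mul_nonneg hNR.le hm_nonneg)]
  have hN2 : (0:ℝ) < (N:ℝ)*N := by positivity
  have h1 : (1:ℝ)/N * ∑ k : Fin N, (hammingD M (A k))^2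
      = (∑ k : Fin N, (hammingD M (A k))^2) * N / ((N:ℝ)*N) := by
    field_simp
  have h2 : 2 * ((1:ℝ)/N * E)^2 + ((1:ℝ)/N * Q - ((1:ℝ)/N * E)^2)
      = (Q * N + E^2) / ((N:ℝ)*N) := by
    field_simp
    ring
  rw [h1, h2]
  exact div_le_div_of_nonneg_right key hN2.le
end

section
/- If Ā is a sample Fréchet mean for the Hamming distance (a minimizer of ∑_k d_H²(·, A^{(k)})), then its number of edges satisfies e(Ā) ≤ 2·ē_N + σ_N(e)/√2, where ē_N is the sample mean and σ_N(e) the sample standard deviation of the edge counts. -/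
open Finset

lemma edges_nonneg {n : ℕ} {A : Matrix (Fin n) (Fin n) ℝ} (h : IsAdj A) :
    0 ≤ edges A := by
  apply Finset.sum_nonneg; intro i _
  apply Finset.sum_nonneg; intro j _
  by_cases hij : i < j
  · rcases h.1 i j with h' | h' <;> simp [hij, h']
  · simp [hij]

lemma hammingD_zero_left {n : ℕ} {A : Matrix (Fin n) (Fin n) ℝ} (h : IsAdj A) :
    hammingD 0 A = edges A := by
  unfold hammingD edges
  refine Finset.sum_congr rfl fun i _ => Finset.sum_congr rfl fun j _ => ?_
  by_cases hij : i < j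
  · rcases h.1 i j with h' | h' <;> simp [hij, h']
  · simp [hij]

lemma edges_sub_le_hammingD {n : ℕ} (A B : Matrix (Fin n) (Fin n) ℝ) :
    edges A - edges B ≤ hammingD A B := by
  unfold hammingD edges
  rw [← Finset.sum_sub_distrib]
  apply Finset.sum_le_sum
  intro i _
  rw [← Finset.sum_sub_distrib]
  apply Finset.sum_le_sum
  intro j _
  by_cases hij : i < j
  · simp only [hij, if_true]
    exact le_trans (le_abs_self _) (le_refl _)
  · simp [hij]

lemma hammingD_nonneg {n : ℕ} (A B : Matrix (Fin n) (Fin n) ℝ) :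
    0 ≤ hammingD A B := by
  apply Finset.sum_nonneg; intro i _
  apply Finset.sum_nonneg; intro j _
  by_cases hij : i < j <;> simp [hij, abs_nonneg]

lemma hammingD_comm {n : ℕ} (A B : Matrix (Fin n) (Fin n) ℝ) :
    hammingD A B = hammingD B A := by
  unfold hammingD
  refine Finset.sum_congr rfl fun i _ => Finset.sum_congr rfl fun j _ => ?_
  by_cases hij : i < j <;> simp [hij, abs_sub_comm]

theorem frechet_mean_edges_bound {n N : ℕ} (hN : 0 < N)
    (A : Fin N → Matrix (Fin n) (Fin n) ℝ) (hA : ∀ k, IsAdj (A k))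
    (Abar : Matrix (Fin n) (Fin n) ℝ) (hAbar : IsAdj Abar)
    (hmin : ∀ B : Matrix (Fin n) (Fin n) ℝ, IsAdj B →
      ∑ k : Fin N, (hammingD Abar (A k)) ^ 2 ≤
        ∑ k : Fin N, (hammingD B (A k)) ^ 2) :
    edges Abar ≤
      2 * ((1 : ℝ) / N * ∑ k : Fin N, edges (A k)) +
        Real.sqrt ((1 : ℝ) / N * ∑ k : Fin N, (edges (A k)) ^ 2 -
          ((1 : ℝ) / N * ∑ k : Fin N, edges (A k)) ^ 2) / Real.sqrt 2 := by
  set x := edges Abar with hx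
  have hzero : IsAdj (0 : Matrix (Fin n) (Fin n) ℝ) := by
    refine ⟨fun i j => Or.inl rfl, fun i j => rfl, fun i => rfl⟩
  have h0 := hmin 0 hzero
  have hd0 : ∀ k, hammingD (0 : Matrix (Fin n) (Fin n) ℝ) (A k) = edges (A k) :=
    fun k => hammingD_zero_left (hA k)
  have h1 : ∑ k : Fin N, (hammingD Abar (A k)) ^ 2 ≤ ∑ k : Fin N, (edges (A k)) ^ 2 := by
    calc ∑ k : Fin N, (hammingD Abar (A k)) ^ 2
        ≤ ∑ k : Fin N, (hammingD 0 (A k)) ^ 2 := h0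
      _ = ∑ k : Fin N, (edges (A k)) ^ 2 := by
          refine Finset.sum_congr rfl fun k _ => by rw [hd0 k]
  have h2 : ∀ k, (x - edges (A k)) ^ 2 ≤ (hammingD Abar (A k)) ^ 2 := by
    intro k
    have hlo : edges (A k) - x ≤ hammingD Abar (A k) := by
      rw [hammingD_comm]; exact edges_sub_le_hammingD _ _
    have hhi : x - edges (A k) ≤ hammingD Abar (A k) := edges_sub_le_hammingD _ _
    have := sq_le_sq' (by linarith) hhi
    simpa using this
  have h3 : ∑ k : Fin N, (x - edges (A k)) ^ 2 ≤ ∑ k : Fin N, (edges (A k)) ^ 2 :=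
    le_trans (Finset.sum_le_sum fun k _ => h2 k) h1
  set S := ∑ k : Fin N, edges (A k) with hS
  have hSnonneg : 0 ≤ S := Finset.sum_nonneg fun k _ => edges_nonneg (hA k)
  have hexp : ∑ k : Fin N, (x - edges (A k)) ^ 2 =
      N * x ^ 2 - 2 * x * S + ∑ k : Fin N, (edges (A k)) ^ 2 := by
    have : ∀ k : Fin N, (x - edges (A k)) ^ 2 =
        x ^ 2 - 2 * x * edges (A k) + (edges (A k)) ^ 2 := fun k => by ring
    rw [Finset.sum_congr rfl fun k _ => this k]
    simp [Finset.sum_add_distrib, Finset.sum_sub_distrib, Finset.mul_sum, hS]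
  have hkey : (N : ℝ) * x ^ 2 ≤ 2 * x * S := by
    rw [hexp] at h3; linarith
  have hxnn : 0 ≤ x := edges_nonneg hAbar
  have hNpos : (0 : ℝ) < N := by exact_mod_cast hN
  have hmain : x ≤ 2 * ((1 : ℝ) / N * S) := by
    rcases eq_or_lt_of_le hxnn with heq | hpos
    · rw [← heq]; positivity
    · have hNx : (N : ℝ) * x ≤ 2 * S := by
        calc (N : ℝ) * x = x⁻¹ * ((N : ℝ) * x ^ 2) := by field_simp
          _ ≤ x⁻¹ * (2 * x * S) :=
              mul_le_mul_of_nonneg_left hkey (le_of_lt (inv_pos.mpr hpos))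
          _ = 2 * S := by field_simp
      have hdiv : x ≤ 2 * S / N := (le_div_iff₀ hNpos).mpr (by linarith)
      have heq : 2 * ((1 : ℝ) / N * S) = 2 * S / N := by ring
      linarith
  have hsqrt : 0 ≤ Real.sqrt ((1 : ℝ) / N * ∑ k : Fin N, (edges (A k)) ^ 2 -
      ((1 : ℝ) / N * S) ^ 2) / Real.sqrt 2 :=
    div_nonneg (Real.sqrt_nonneg _) (Real.sqrt_nonneg _)
  linarith
end

section
/- If Ā is a sample Fréchet mean with respect to the adjacency spectral pseudometric (its eigenvalue vector λ(Ā) minimizes ∑_k ‖λ - λ(A^{(k)})‖² over eigenvalue vectors of adjacency matrices), then ‖λ(Ā)‖ ≤ 3√(2·ē_N), assuming there exists k₀ with ‖λ(A^{(k₀)})‖ ≤ ‖λ̄‖ where λ̄ is the mean eigenvalue vector. -/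
open Finset

/-- Euclidean norm of a vector in `ℝⁿ`. -/
noncomputable def vnorm {n : ℕ} (v : Fin n → ℝ) : ℝ :=
  Real.sqrt (∑ i : Fin n, v i ^ 2)

lemma vnorm_eq {n : ℕ} (v : Fin n → ℝ) :
    vnorm v = ‖(WithLp.linearEquiv 2 ℝ (Fin n → ℝ)).symm v‖ := by
  rw [vnorm, EuclideanSpace.norm_eq]
  congr 1
  refine Finset.sum_congr rfl fun i _ => ?_
  rw [Real.norm_eq_abs, sq_abs]
  rfl

lemma vnorm_nonneg {n : ℕ} (v : Fin n → ℝ) : 0 ≤ vnorm v := Real.sqrt_nonneg _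

lemma vnorm_add_le {n : ℕ} (u w : Fin n → ℝ) : vnorm (u + w) ≤ vnorm u + vnorm w := by
  rw [vnorm_eq, vnorm_eq, vnorm_eq, map_add]
  exact norm_add_le _ _

lemma vnorm_sub_le {n : ℕ} (u w : Fin n → ℝ) : vnorm (u - w) ≤ vnorm u + vnorm w := by
  rw [vnorm_eq, vnorm_eq, vnorm_eq, map_sub]
  exact norm_sub_le _ _

lemma vnorm_sq {n : ℕ} (v : Fin n → ℝ) : vnorm v ^ 2 = ∑ i : Fin n, v i ^ 2 := by
  rw [vnorm]
  exact Real.sq_sqrt (Finset.sum_nonneg fun i _ => sq_nonneg _)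

lemma sum_eig_sq {n : ℕ} (A : Matrix (Fin n) (Fin n) ℝ) (hA : A.IsHermitian) :
    (A * A).trace = ∑ i, hA.eigenvalues i ^ 2 := by
  set U : Matrix (Fin n) (Fin n) ℝ := (Matrix.IsHermitian.eigenvectorUnitary hA : Matrix (Fin n) (Fin n) ℝ)
  have hU : star U * U = 1 := Matrix.mem_unitaryGroup_iff'.mp (Matrix.IsHermitian.eigenvectorUnitary hA).2
  have h := hA.spectral_theorem
  have hD : (Matrix.diagonal (RCLike.ofReal ∘ hA.eigenvalues) : Matrix (Fin n) (Fin n) ℝ)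
      = Matrix.diagonal hA.eigenvalues := rfl
  rw [hD] at h
  set D : Matrix (Fin n) (Fin n) ℝ := Matrix.diagonal hA.eigenvalues
  calc (A * A).trace = (U * D * star U * (U * D * star U)).trace := by rw [h, Unitary.conjStarAlgAut_apply]
    _ = (U * (D * (star U * U) * D) * star U).trace := by congr 1; simp only [mul_assoc]
    _ = (U * (D * D) * star U).trace := by rw [hU, mul_one]
    _ = (D * D).trace := by rw [Matrix.trace_mul_cycle, hU, one_mul]
    _ = ∑ i, hA.eigenvalues i ^ 2 := by
        simp [D, Matrix.diagonal_mul_diagonal, Matrix.trace, Matrix.diag, sq]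

lemma sum_eig_sq_eq_edges {n : ℕ} (A : Matrix (Fin n) (Fin n) ℝ) (hadj : IsAdj A)
    (hA : A.IsHermitian) :
    ∑ i, hA.eigenvalues i ^ 2 = 2 * edges A := by
  obtain ⟨h01, hsym, hdiag⟩ := hadj
  rw [← sum_eig_sq A hA, edges]
  have htr : (A * A).trace = ∑ i : Fin n, ∑ j : Fin n, A i j := by
    rw [Matrix.trace]
    refine Finset.sum_congr rfl fun i _ => ?_
    rw [Matrix.diag, Matrix.mul_apply]
    refine Finset.sum_congr rfl fun j _ => ?_
    rw [← hsym i j]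
    rcases h01 i j with h | h <;> rw [h] <;> ring
  rw [htr]
  have hsplit : ∀ i j : Fin n, A i j =
      (if i < j then A i j else 0) + (if j < i then A j i else 0) := by
    intro i j
    rcases lt_trichotomy i j with h | h | h
    · simp [h, not_lt.mpr h.le]
    · subst h; simp [hdiag i]
    · simp [h, not_lt.mpr h.le, hsym i j]
  calc ∑ i : Fin n, ∑ j : Fin n, A i j
      = ∑ i : Fin n, ∑ j : Fin n, ((if i < j then A i j else 0) + (if j < i then A j i else 0)) := by
        refine Finset.sum_congr rfl fun i _ => Finset.sum_congr rfl fun j _ => hsplit i j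
    _ = (∑ i : Fin n, ∑ j : Fin n, if i < j then A i j else 0)
        + ∑ i : Fin n, ∑ j : Fin n, if j < i then A j i else 0 := by
        simp [Finset.sum_add_distrib]
    _ = 2 * (∑ i : Fin n, ∑ j : Fin n, if i < j then A i j else 0) := by
        rw [Finset.sum_comm (f := fun i j => if j < i then A j i else 0)]
        ring

lemma scalar_ident {N : ℕ} (hN : 0 < N) (a : Fin N → ℝ) (x : ℝ) :
    ∑ k : Fin N, (x - a k) ^ 2
      = N * (x - (1 : ℝ) / N * ∑ k : Fin N, a k) ^ 2
        + (∑ k : Fin N, (a k) ^ 2 - N * ((1 : ℝ) / N * ∑ k : Fin N, a k) ^ 2) := by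
  have hNne : (N : ℝ) ≠ 0 := Nat.cast_ne_zero.mpr hN.ne'
  have e1 : ∑ k : Fin N, (x - a k) ^ 2
      = N * x ^ 2 - 2 * x * (∑ k : Fin N, a k) + ∑ k : Fin N, (a k) ^ 2 := by
    have : ∀ k : Fin N, (x - a k) ^ 2 = x ^ 2 - 2 * x * a k + a k ^ 2 := fun k => by ring
    rw [Finset.sum_congr rfl fun k _ => this k]
    rw [Finset.sum_add_distrib, Finset.sum_sub_distrib, Finset.sum_const, ← Finset.mul_sum]
    simp [Finset.card_univ]
  rw [e1]
  field_simp
  ring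

theorem spectral_mean_norm_bound {n N : ℕ} (hN : 0 < N)
    (A : Fin N → Matrix (Fin n) (Fin n) ℝ) (hadj : ∀ k, IsAdj (A k))
    (hA : ∀ k, (A k).IsHermitian)
    (Abar : Matrix (Fin n) (Fin n) ℝ) (hAbaradj : IsAdj Abar)
    (hAbar : Abar.IsHermitian)
    (hmin : ∀ (B : Matrix (Fin n) (Fin n) ℝ), IsAdj B → ∀ hB : B.IsHermitian,
      ∑ k : Fin N, (vnorm (hAbar.eigenvalues - (hA k).eigenvalues)) ^ 2 ≤
        ∑ k : Fin N, (vnorm (hB.eigenvalues - (hA k).eigenvalues)) ^ 2)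
    (hk₀ : ∃ k₀ : Fin N, vnorm ((hA k₀).eigenvalues) ≤
      vnorm (fun i => (1 : ℝ) / N * ∑ k : Fin N, (hA k).eigenvalues i)) :
    vnorm hAbar.eigenvalues ≤
      3 * Real.sqrt (2 * ((1 : ℝ) / N * ∑ k : Fin N, edges (A k))) := by
  have hNne : (N : ℝ) ≠ 0 := Nat.cast_ne_zero.mpr hN.ne'
  have hNpos : (0 : ℝ) < N := Nat.cast_pos.mpr hN
  obtain ⟨k₀, hk0⟩ := hk₀
  set x : Fin n → ℝ := hAbar.eigenvalues with hx
  set y : Fin n → ℝ := (hA k₀).eigenvalues with hy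
  set m : Fin n → ℝ := fun i => (1 : ℝ) / N * ∑ k : Fin N, (hA k).eigenvalues i with hm
  -- key identity
  have e : ∀ z : Fin n → ℝ,
      ∑ k : Fin N, ∑ i : Fin n, (z i - (hA k).eigenvalues i) ^ 2
        = N * ∑ i : Fin n, (z i - m i) ^ 2
          + (∑ i : Fin n, ∑ k : Fin N, ((hA k).eigenvalues i) ^ 2
             - N * ∑ i : Fin n, m i ^ 2) := by
    intro z
    rw [Finset.sum_comm]
    rw [Finset.sum_congr rfl fun i (_ : i ∈ Finset.univ) =>
      scalar_ident hN (fun k => (hA k).eigenvalues i) (z i)]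
    rw [Finset.sum_add_distrib, Finset.sum_sub_distrib, ← Finset.mul_sum, ← Finset.mul_sum]
  have hmin' := hmin (A k₀) (hadj k₀) (hA k₀)
  have hvs : ∀ (w : Fin n → ℝ) (k : Fin N),
      vnorm (w - (hA k).eigenvalues) ^ 2 = ∑ i : Fin n, (w i - (hA k).eigenvalues i) ^ 2 := by
    intro w k
    rw [vnorm_sq]
    exact Finset.sum_congr rfl fun i _ => by rw [Pi.sub_apply]
  rw [Finset.sum_congr rfl fun k _ => hvs x k, Finset.sum_congr rfl fun k _ => hvs y k] at hmin'
  rw [e x, e y] at hmin'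
  have key : ∑ i : Fin n, (x i - m i) ^ 2 ≤ ∑ i : Fin n, (y i - m i) ^ 2 := by
    have h := le_of_add_le_add_right hmin'
    exact le_of_mul_le_mul_left h hNpos
  have key' : vnorm (x - m) ≤ vnorm (y - m) := by
    rw [vnorm, vnorm]
    apply Real.sqrt_le_sqrt
    simpa [Pi.sub_apply] using key
  -- triangle inequalities
  have tri1 : vnorm x ≤ vnorm (x - m) + vnorm m := by
    have : x = (x - m) + m := by ring
    calc vnorm x = vnorm ((x - m) + m) := by rw [← this]
      _ ≤ vnorm (x - m) + vnorm m := vnorm_add_le _ _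
  have tri2 : vnorm (y - m) ≤ vnorm y + vnorm m := vnorm_sub_le _ _
  -- Jensen : vnorm m ≤ sqrt (2 ē)
  have hmean : ∑ i : Fin n, m i ^ 2 ≤ 2 * ((1 : ℝ) / N * ∑ k : Fin N, edges (A k)) := by
    have h1 : ∀ i : Fin n, m i ^ 2 ≤ (1 : ℝ) / N * ∑ k : Fin N, ((hA k).eigenvalues i) ^ 2 := by
      intro i
      have h2 := sq_sum_le_card_mul_sum_sq (s := (Finset.univ : Finset (Fin N)))
        (f := fun k => (hA k).eigenvalues i)
      rw [Finset.card_univ, Fintype.card_fin] at h2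
      have h3 : m i ^ 2 = ((1 : ℝ) / N) ^ 2 * (∑ k : Fin N, (hA k).eigenvalues i) ^ 2 := by
        rw [hm]; rw [mul_pow]
      rw [h3]
      calc ((1 : ℝ) / N) ^ 2 * (∑ k : Fin N, (hA k).eigenvalues i) ^ 2
          ≤ ((1 : ℝ) / N) ^ 2 * ((N : ℝ) * ∑ k : Fin N, ((hA k).eigenvalues i) ^ 2) := by
            apply mul_le_mul_of_nonneg_left _ (sq_nonneg _)
            exact h2
        _ = (1 : ℝ) / N * ∑ k : Fin N, ((hA k).eigenvalues i) ^ 2 := by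
            field_simp
    calc ∑ i : Fin n, m i ^ 2
        ≤ ∑ i : Fin n, (1 : ℝ) / N * ∑ k : Fin N, ((hA k).eigenvalues i) ^ 2 :=
          Finset.sum_le_sum fun i _ => h1 i
      _ = (1 : ℝ) / N * ∑ k : Fin N, ∑ i : Fin n, ((hA k).eigenvalues i) ^ 2 := by
          rw [← Finset.mul_sum, Finset.sum_comm]
      _ = (1 : ℝ) / N * ∑ k : Fin N, 2 * edges (A k) := by
          rw [Finset.sum_congr rfl fun k (_ : k ∈ Finset.univ) =>
            sum_eig_sq_eq_edges (A k) (hadj k) (hA k)]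
      _ = 2 * ((1 : ℝ) / N * ∑ k : Fin N, edges (A k)) := by
          rw [← Finset.mul_sum]; ring
  have h4 : vnorm m ≤ Real.sqrt (2 * ((1 : ℝ) / N * ∑ k : Fin N, edges (A k))) := by
    rw [vnorm]
    exact Real.sqrt_le_sqrt hmean
  have hk0' : vnorm y ≤ vnorm m := hk0
  linarith [vnorm_nonneg m]
end
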